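/- For any integer q ≥ 2 there are no constants c > 0 and γ ∈ (0,q) such that the number of partitions in Π^m(q) with all blocks of size at least 2 and connected row structure satisfies |Π̃^m_{≥2}(q)| ≤ c^m (m!)^γ for all m ∈ ℕ. -/

import Mathlib

open Finset Relation

namespace Stmt2

def avd (a b : ℕ) : ℕ := if b < a then b else b + 1

lemma avd_ne (a b : ℕ) : avd a b ≠ a := by unfold avd; split <;> omega

lemma avd_lt {t a b : ℕ} (hb : b < t - 1) : avd a b < t := by unfold avd; split <;> omega

lemma avd_inj {a b b' : ℕ} (h : avd a b = avd a b') : b = b' := by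
  unfold avd at h; split at h <;> split at h <;> omega

/-- the label (block id) of an element -/
def lab (q t : ℕ) (g : ℕ → ℕ → ℕ) {n : ℕ} (x : Fin n) : Option (ℕ × ℕ) :=
  if x.1 / q < 2*t then (if x.1 % q = 0 then none else some ((x.1/q) % t, x.1 % q))
  else some (if x.1 % q = 0 then (avd (g (x.1/q - 2*t) 1) (g (x.1/q - 2*t) 0), 1)
             else (g (x.1/q - 2*t) (x.1 % q), x.1 % q))

lemma row_col {q ℓ j : ℕ} (hj : j < q) : (q*ℓ+j)/q = ℓ ∧ (q*ℓ+j) % q = j := by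
  constructor
  · rw [Nat.mul_add_div (by omega), Nat.div_eq_of_lt hj]; omega
  · rw [Nat.mul_add_mod, Nat.mod_eq_of_lt hj]

lemma lab_at {q t m : ℕ} (g : ℕ → ℕ → ℕ) {ℓ j : ℕ} (hj : j < q) (h : q*ℓ+j < q*m) :
    lab q t g (⟨q*ℓ+j, h⟩ : Fin (q*m)) =
      if ℓ < 2*t then (if j = 0 then none else some (ℓ % t, j))
      else some (if j = 0 then (avd (g (ℓ-2*t) 1) (g (ℓ-2*t) 0), 1) else (g (ℓ-2*t) j, j)) := by
  unfold lab
  simp only [(row_col (ℓ := ℓ) hj).1, (row_col (ℓ := ℓ) hj).2]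

lemma fin_eq_mk {q m : ℕ} (hq : 0 < q) (x : Fin (q*m)) :
    x = ⟨q*(x.1/q) + x.1 % q, by rw [Nat.div_add_mod]; exact x.2⟩ :=
  Fin.ext (Nat.div_add_mod _ _).symm

lemma row_lt {q m : ℕ} (hq : 0 < q) (x : Fin (q*m)) : x.1 / q < m := by
  exact Nat.div_lt_of_lt_mul x.2

lemma elem_lt {q m ℓ j : ℕ} (hℓ : ℓ < m) (hj : j < q) : q*ℓ+j < q*m :=
  calc q*ℓ+j < q*ℓ+q := by omega
  _ = q*(ℓ+1) := by ring
  _ ≤ q*m := Nat.mul_le_mul_left _ (by omega)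

/-- joint injectivity: same label and same row implies equal -/
lemma lab_inj {q t m : ℕ} (hq : 0 < q) (g : ℕ → ℕ → ℕ) {x y : Fin (q*m)}
    (h : lab q t g x = lab q t g y) (hrow : x.1/q = y.1/q) : x = y := by
  have hx := Nat.div_add_mod x.1 q
  have hy := Nat.div_add_mod y.1 q
  have hcol : x.1 % q = y.1 % q := by
    unfold lab at h
    rw [hrow] at h
    by_cases hl : y.1/q < 2*t <;> simp only [hl, if_true, if_false] at h
    · by_cases hx0 : x.1 % q = 0 <;> by_cases hy0 : y.1 % q = 0 <;>
        simp only [hx0, hy0, if_true, if_false] at h <;> try omega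
      · simp at h
      · simp at h
      · simp only [Option.some.injEq, Prod.mk.injEq] at h; exact h.2
    · by_cases hx0 : x.1 % q = 0 <;> by_cases hy0 : y.1 % q = 0 <;>
        simp only [hx0, hy0, if_true, if_false, Option.some.injEq, Prod.mk.injEq] at h <;>
        try omega
      · have h2 : (1:ℕ) = y.1 % q := h.2
        rw [← h2] at h
        exact absurd h.1 (avd_ne _ _)
      · have h2 : x.1 % q = 1 := h.2
        rw [h2] at h
        exact absurd h.1.symm (avd_ne _ _)
  have hq2 : q * (x.1/q) = q * (y.1/q) := by rw [hrow]
  exact Fin.ext (by omega)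


instance labDec {n : ℕ} (f : Fin n → Option (ℕ × ℕ)) : DecidableRel (Setoid.ker f).r :=
  fun a b => inferInstanceAs (Decidable (f a = f b))

/-- the partition associated to parameters g -/
def pa (q t m : ℕ) (g : ℕ → ℕ → ℕ) : Finpartition (univ : Finset (Fin (q*m))) :=
  Finpartition.ofSetoid (Setoid.ker (lab q t g))

lemma mem_part_iff {q t m : ℕ} (g : ℕ → ℕ → ℕ) {x y : Fin (q*m)} :
    y ∈ (pa q t m g).part x ↔ lab q t g x = lab q t g y :=
  Finpartition.mem_part_ofSetoid_iff_rel

lemma exists_rep {q t m : ℕ} (g : ℕ → ℕ → ℕ) {B : Finset (Fin (q*m))}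
    (hB : B ∈ (pa q t m g).parts) : ∃ x, (pa q t m g).part x = B := by
  obtain ⟨x, -, hx⟩ := (pa q t m g).part_surjOn hB
  exact ⟨x, hx⟩

/-- every nonempty fiber has a second element -/
lemma exists_partner {q t m : ℕ} (hq : 2 ≤ q) (ht : 2 ≤ t) (hm : 2*t ≤ m)
    (g : ℕ → ℕ → ℕ) (hg : ∀ i j, g i j < t - 1) (x : Fin (q*m)) :
    ∃ y : Fin (q*m), y ≠ x ∧ lab q t g y = lab q t g x := by
  have hq0 : 0 < q := by omega
  have hℓm : x.1/q < m := row_lt hq0 x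
  have hjq : x.1 % q < q := Nat.mod_lt _ hq0
  rw [fin_eq_mk hq0 x]
  set ℓ := x.1/q with hℓ
  set j := x.1 % q with hj
  by_cases hl : ℓ < 2*t
  · -- reserved row: partner is the mate row (ℓ+t or ℓ-t)
    set ℓ' := if ℓ < t then ℓ + t else ℓ - t with hℓ'
    have hℓ'lt : ℓ' < 2*t := by rw [hℓ']; split <;> omega
    have hℓ'ne : ℓ' ≠ ℓ := by rw [hℓ']; split <;> omega
    have hmod : ℓ' % t = ℓ % t := by
      rw [hℓ']; split
      · rw [Nat.add_mod_right]
      · rw [Nat.mod_eq_of_lt (by omega), Nat.mod_eq_sub_mod (by omega)]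
        exact (Nat.mod_eq_of_lt (by omega)).symm
    refine ⟨⟨q*ℓ'+j, elem_lt (by omega) hjq⟩, ?_, ?_⟩
    · intro h
      have hvv : q*ℓ'+j = q*ℓ+j := congrArg Fin.val h
      have h1 : q * ℓ' = q * ℓ := by omega
      exact hℓ'ne (Nat.eq_of_mul_eq_mul_left hq0 h1)
    · rw [lab_at g hjq, lab_at g hjq]
      simp only [hl, hℓ'lt, if_true, hmod]
      simp only [← hℓ, hl, if_true]
  · -- free row: partner is the reserved representative
    push_neg at hl
    by_cases hj0 : j = 0
    · set r := avd (g (ℓ-2*t) 1) (g (ℓ-2*t) 0) with hr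
      have hrt : r < t := avd_lt (hg _ _)
      refine ⟨⟨q*r+1, elem_lt (by omega) (by omega)⟩, ?_, ?_⟩
      · intro h
        have hvv : q*r+1 = q*ℓ+j := congrArg Fin.val h
        have hexp : q*(r+1) = q*r+q := by ring
        have hle : q*(r+1) ≤ q*ℓ := Nat.mul_le_mul_left q (by omega)
        omega
      · rw [lab_at g (by omega), lab_at g hjq]
        rw [if_pos (show r < 2*t by omega), if_neg (one_ne_zero),
          if_neg (Nat.not_lt.2 hl), if_pos hj0, Nat.mod_eq_of_lt hrt, hr]
    · set r := g (ℓ-2*t) j with hr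
      have hrt : r < t := by have := hg (ℓ-2*t) j; omega
      refine ⟨⟨q*r+j, elem_lt (by omega) hjq⟩, ?_, ?_⟩
      · intro h
        have hvv : q*r+j = q*ℓ+j := congrArg Fin.val h
        have h1 : q * r = q * ℓ := by omega
        have := Nat.eq_of_mul_eq_mul_left hq0 h1
        omega
      · rw [lab_at g hjq, lab_at g hjq]
        rw [if_pos (show r < 2*t by omega), if_neg hj0,
          if_neg (Nat.not_lt.2 hl), if_neg hj0, Nat.mod_eq_of_lt hrt, hr]

lemma pa_cond1 {q t m : ℕ} (hq : 0 < q) (g : ℕ → ℕ → ℕ) :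
    ∀ B ∈ (pa q t m g).parts, ∀ ℓ < m, (B.filter (fun i => i.val / q = ℓ)).card ≤ 1 := by
  intro B hB ℓ _
  obtain ⟨x, rfl⟩ := exists_rep g hB
  rw [Finset.card_le_one]
  intro a ha b hb
  rw [Finset.mem_filter] at ha hb
  have la := (mem_part_iff g).1 ha.1
  have lb := (mem_part_iff g).1 hb.1
  exact lab_inj hq g (la.symm.trans lb) (by rw [ha.2, hb.2])

lemma pa_cond2 {q t m : ℕ} (hq : 2 ≤ q) (ht : 2 ≤ t) (hm : 2*t ≤ m)
    (g : ℕ → ℕ → ℕ) (hg : ∀ i j, g i j < t - 1) :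
    ∀ B ∈ (pa q t m g).parts, 2 ≤ B.card := by
  intro B hB
  obtain ⟨x, rfl⟩ := exists_rep g hB
  obtain ⟨y, hyx, hy⟩ := exists_partner hq ht hm g hg x
  exact Finset.one_lt_card.2 ⟨x, (pa q t m g).mem_part (mem_univ x),
    y, (mem_part_iff g).2 hy.symm, fun h => hyx h.symm⟩

lemma pa_cond3 {q t m : ℕ} (hq : 2 ≤ q) (ht : 2 ≤ t) (hm : 2*t ≤ m)
    (g : ℕ → ℕ → ℕ) (hg : ∀ i j, g i j < t - 1) :
    ∀ a b : Fin m, Relation.ReflTransGen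
      (fun u v : Fin m => ∃ B ∈ (pa q t m g).parts,
        (∃ x ∈ B, x.val / q = u.val) ∧ (∃ x ∈ B, x.val / q = v.val)) a b := by
  set R := fun u v : Fin m => ∃ B ∈ (pa q t m g).parts,
        (∃ x ∈ B, x.val / q = u.val) ∧ (∃ x ∈ B, x.val / q = v.val) with hR
  have hsym : Symmetric R := by
    rintro u v ⟨B, hB, h1, h2⟩; exact ⟨B, hB, h2, h1⟩
  have key : ∀ (u v : Fin m) (x y : Fin (q*m)), lab q t g x = lab q t g y →
      x.1/q = u.1 → y.1/q = v.1 → R u v := by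
    intro u v x y hxy hx hy
    exact ⟨(pa q t m g).part x, (pa q t m g).part_mem.2 (mem_univ x),
      ⟨x, (pa q t m g).mem_part (mem_univ x), hx⟩, ⟨y, (mem_part_iff g).2 hxy, hy⟩⟩
  have hm0 : 0 < m := by omega
  have toZero : ∀ u : Fin m, Relation.ReflTransGen R u ⟨0, hm0⟩ := by
    intro u
    have hu : u.1 < m := u.2
    by_cases hl : u.1 < 2*t
    · refine Relation.ReflTransGen.single ?_
      refine key u ⟨0, hm0⟩ ⟨q*u.1+0, elem_lt hu (by omega)⟩
        ⟨q*0+0, elem_lt (by omega) (by omega)⟩ ?_ ?_ ?_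
      · rw [lab_at g (by omega), lab_at g (by omega)]
        rw [if_pos hl, if_pos (show (0:ℕ) < 2*t by omega), if_pos rfl, if_pos rfl]
      · exact (row_col (by omega)).1
      · exact (row_col (by omega)).1
    · push_neg at hl
      have hg1 : g (u.1-2*t) 1 < t := by have := hg (u.1-2*t) 1; omega
      refine Relation.ReflTransGen.head (b := ⟨g (u.1-2*t) 1, by omega⟩) ?_
        (Relation.ReflTransGen.single ?_)
      · refine key u ⟨g (u.1-2*t) 1, by omega⟩ ⟨q*u.1+1, elem_lt hu (by omega)⟩
          ⟨q*(g (u.1-2*t) 1)+1, elem_lt (by omega) (by omega)⟩ ?_ ?_ ?_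
        · rw [lab_at g (by omega), lab_at g (by omega)]
          rw [if_neg (Nat.not_lt.2 hl), if_neg one_ne_zero,
            if_pos (show g (u.1-2*t) 1 < 2*t by omega), if_neg one_ne_zero,
            Nat.mod_eq_of_lt hg1]
        · exact (row_col (by omega)).1
        · exact (row_col (by omega)).1
      · refine key _ ⟨0, hm0⟩ ⟨q*(g (u.1-2*t) 1)+0, elem_lt (by omega) (by omega)⟩
          ⟨q*0+0, elem_lt (by omega) (by omega)⟩ ?_ ?_ ?_
        · rw [lab_at g (by omega), lab_at g (by omega)]
          rw [if_pos (show g (u.1-2*t) 1 < 2*t by omega), if_pos rfl,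
            if_pos (show (0:ℕ) < 2*t by omega), if_pos rfl]
        · exact (row_col (by omega)).1
        · exact (row_col (by omega)).1
  intro a b
  exact (toZero a).trans (by haveI : Std.Symm R := ⟨fun _ _ h => hsym h⟩; exact Std.Symm.symm _ _ (toZero b))

lemma pa_inj {q t m : ℕ} (hq : 2 ≤ q) (ht : 2 ≤ t) (hm : 2*t ≤ m)
    {g g' : ℕ → ℕ → ℕ} (hg : ∀ i j, g i j < t - 1) (hg' : ∀ i j, g' i j < t - 1)
    (h : pa q t m g = pa q t m g') :
    ∀ i, i < m - 2*t → ∀ j, j < q → g i j = g' i j := by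
  have hq0 : 0 < q := by omega
  have hrel : ∀ x y : Fin (q*m), lab q t g x = lab q t g y →
      lab q t g' x = lab q t g' y := by
    intro x y hxy
    have h2 := (mem_part_iff g).2 hxy
    rw [h] at h2
    exact (mem_part_iff g').1 h2
  have main : ∀ i, i < m - 2*t → ∀ j, 0 < j → j < q → g i j = g' i j := by
    intro i hi j hj0 hj
    have hrow : 2*t+i < m := by omega
    have hgt : g i j < t := by have := hg i j; omega
    have e1 : lab q t g ⟨q*(2*t+i)+j, elem_lt hrow hj⟩ =
        lab q t g ⟨q*(g i j)+j, elem_lt (show g i j < m by omega) hj⟩ := by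
      rw [lab_at g hj, lab_at g hj]
      rw [if_neg (show ¬(2*t+i < 2*t) by omega), if_neg (by omega),
        if_pos (show g i j < 2*t by omega), if_neg (by omega),
        Nat.mod_eq_of_lt hgt, Nat.add_sub_cancel_left]
    have e2 := hrel _ _ e1
    rw [lab_at g' hj, lab_at g' hj, if_neg (show ¬(2*t+i < 2*t) by omega),
      if_neg (by omega), if_pos (show g i j < 2*t by omega), if_neg (by omega),
      Nat.mod_eq_of_lt hgt, Nat.add_sub_cancel_left] at e2
    simp only [Option.some.injEq, Prod.mk.injEq] at e2
    exact e2.1.symm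
  intro i hi j hj
  rcases Nat.eq_zero_or_pos j with rfl | hj0
  · have hrow : 2*t+i < m := by omega
    have hat : avd (g i 1) (g i 0) < t := avd_lt (hg i 0)
    have e1 : lab q t g ⟨q*(2*t+i)+0, elem_lt hrow (by omega)⟩ =
        lab q t g ⟨q*(avd (g i 1) (g i 0))+1,
          elem_lt (show avd (g i 1) (g i 0) < m by omega) (show 1 < q by omega)⟩ := by
      rw [lab_at g (by omega), lab_at g (by omega)]
      rw [if_neg (show ¬(2*t+i < 2*t) by omega), if_pos rfl,
        if_pos (show avd (g i 1) (g i 0) < 2*t by omega), if_neg one_ne_zero,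
        Nat.mod_eq_of_lt hat, Nat.add_sub_cancel_left]
    have e2 := hrel _ _ e1
    rw [lab_at g' (by omega), lab_at g' (by omega),
      if_neg (show ¬(2*t+i < 2*t) by omega), if_pos rfl,
      if_pos (show avd (g i 1) (g i 0) < 2*t by omega), if_neg one_ne_zero,
      Nat.mod_eq_of_lt hat, Nat.add_sub_cancel_left] at e2
    simp only [Option.some.injEq, Prod.mk.injEq] at e2
    have h1 : g' i 1 = g i 1 := (main i hi 1 (by omega) (by omega)).symm
    have := e2.1
    rw [h1] at this
    exact (avd_inj this).symm
  · exact main i hi j hj0 hj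

def gof (q t m : ℕ) (G : Fin (m-2*t) → Fin q → Fin (t-1)) : ℕ → ℕ → ℕ :=
  fun i j => if h : i < m-2*t ∧ j < q then (G ⟨i, h.1⟩ ⟨j, h.2⟩).1 else 0

lemma gof_lt {q t m : ℕ} (ht : 2 ≤ t) (G : Fin (m-2*t) → Fin q → Fin (t-1)) :
    ∀ i j, gof q t m G i j < t - 1 := by
  intro i j; unfold gof; split
  · exact (G _ _).2
  · omega

lemma gof_eq {q t m : ℕ} (G : Fin (m-2*t) → Fin q → Fin (t-1))
    (i : Fin (m-2*t)) (j : Fin q) : gof q t m G i.1 j.1 = (G i j).1 := by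
  simp [gof, i.2, j.2]

lemma card_lb {q t m : ℕ} (hq : 2 ≤ q) (ht : 2 ≤ t) (hm : 2*t ≤ m) :
    (t-1)^(q*(m-2*t)) ≤ Nat.card {σ : Finpartition (Finset.univ : Finset (Fin (q * m))) //
      (∀ B ∈ σ.parts, ∀ ℓ < m, (B.filter (fun i => i.val / q = ℓ)).card ≤ 1) ∧
      (∀ B ∈ σ.parts, 2 ≤ B.card) ∧
      (∀ a b : Fin m, Relation.ReflTransGen
        (fun u v : Fin m => ∃ B ∈ σ.parts,
          (∃ x ∈ B, x.val / q = u.val) ∧ (∃ x ∈ B, x.val / q = v.val)) a b)} := by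
  have hq0 : 0 < q := by omega
  have hcard : (t-1)^(q*(m-2*t)) = Nat.card (Fin (m-2*t) → Fin q → Fin (t-1)) := by
    simp [Nat.card_eq_fintype_card]
    rw [← pow_mul, mul_comm]
  rw [hcard]
  exact Nat.card_le_card_of_injective
    (fun G => ⟨pa q t m (gof q t m G), pa_cond1 hq0 _,
      pa_cond2 hq ht hm _ (gof_lt ht G), pa_cond3 hq ht hm _ (gof_lt ht G)⟩)
    (by
      intro G G' h
      have h2 : pa q t m (gof q t m G) = pa q t m (gof q t m G') :=
        congrArg Subtype.val h
      funext i j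
      have h3 := pa_inj hq ht hm (gof_lt ht G) (gof_lt ht G') h2 i.1 i.2 j.1 j.2
      rw [gof_eq, gof_eq] at h3
      exact Fin.ext h3)

end Stmt2


/-- For any integer `q ≥ 2` there are no constants `c > 0` and `γ ∈ (0,q)` such
that `|Π̃^m_{≥2}(q)| ≤ c^m (m!)^γ` for all `m ∈ ℕ`, where `Π̃^m_{≥2}(q)` is the set of
partitions of `{1,...,qm}` meeting each row in at most one element per block, with all blocks
of size at least `2`, and with connected row structure (`|σ*| = 1`). -/
theorem stmt2 (q : ℕ) (hq : 2 ≤ q) :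
    ¬ ∃ (c γ : ℝ), 0 < c ∧ 0 < γ ∧ γ < q ∧ ∀ m : ℕ, 0 < m →
      (Nat.card {σ : Finpartition (Finset.univ : Finset (Fin (q * m))) //
          (∀ B ∈ σ.parts, ∀ ℓ < m, (B.filter (fun i => i.val / q = ℓ)).card ≤ 1) ∧
          (∀ B ∈ σ.parts, 2 ≤ B.card) ∧
          (∀ a b : Fin m, Relation.ReflTransGen
            (fun u v : Fin m => ∃ B ∈ σ.parts,
              (∃ x ∈ B, x.val / q = u.val) ∧ (∃ x ∈ B, x.val / q = v.val)) a b)} : ℝ) ≤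
        c ^ m * (Nat.factorial m : ℝ) ^ γ := by
  rintro ⟨c, γ, hc, hγ0, hγq, hbound⟩
  obtain ⟨K, hK⟩ := exists_nat_gt (max 2 ((2*(q:ℝ)+1)/((q:ℝ)-γ)))
  have hqγ : (0:ℝ) < (q:ℝ) - γ := by linarith
  have hK2 : (2:ℝ) < K := lt_of_le_of_lt (le_max_left _ _) hK
  have hK3 : 3 ≤ K := by
    have : (2:ℕ) < K := by exact_mod_cast hK2
    omega
  set A := q*(K-2) - 1 with hAdef
  have hA1 : A + 1 = q*(K-2) := by
    have h1 : 1*1 ≤ q*(K-2) := Nat.mul_le_mul (by omega) (by omega)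
    omega
  have hAcast : ((A:ℝ)) + 1 = (q:ℝ)*((K:ℝ)-2) := by
    have h2 := congrArg (Nat.cast : ℕ → ℝ) hA1
    push_cast [Nat.cast_sub (show 2 ≤ K by omega)] at h2
    linarith
  have hγK : γ * K ≤ (A:ℝ) := by
    have h2 : (2*(q:ℝ)+1)/((q:ℝ)-γ) < K := lt_of_le_of_lt (le_max_right _ _) hK
    rw [div_lt_iff₀ hqγ] at h2
    nlinarith
  obtain ⟨t, ht'⟩ := exists_nat_gt (max 1 (c^K * (K:ℝ)^A * 2^(A+1)))
  have ht1 : (1:ℝ) < t := lt_of_le_of_lt (le_max_left _ _) ht'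
  have ht2 : 2 ≤ t := by
    have : (1:ℕ) < t := by exact_mod_cast ht1
    omega
  have htR : (2:ℝ) ≤ (t:ℝ) := by exact_mod_cast ht2
  have httR : c^K * (K:ℝ)^A * 2^(A+1) < t := lt_of_le_of_lt (le_max_right _ _) ht'
  set m := K * t with hm
  have hm2t : 2*t ≤ m := Nat.mul_le_mul_right t (by omega)
  have hm0 : 0 < m := Nat.mul_pos (by omega) (by omega)
  have hsub : m - 2*t = (K-2)*t := by
    have := Nat.sub_mul K 2 t
    omega
  have hexp : q*(m-2*t) = (A+1)*t := by rw [hsub, ← mul_assoc, ← hA1]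
  have hlb := Stmt2.card_lb (q := q) (t := t) (m := m) hq ht2 hm2t
  have hb := hbound m hm0
  -- real-number estimates
  have h_t1 : ((t-1:ℕ):ℝ) = (t:ℝ) - 1 := by
    push_cast [Nat.cast_sub (show 1 ≤ t by omega)]
    ring
  have f1 : (Nat.factorial m : ℝ) ≤ (m:ℝ)^(m:ℕ) := by
    exact_mod_cast Nat.cast_le.2 (Nat.factorial_le_pow m)
  have f2 : (Nat.factorial m : ℝ)^γ ≤ ((m:ℝ)^(m:ℕ))^γ :=
    Real.rpow_le_rpow (by positivity) f1 hγ0.le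
  have f3 : ((m:ℝ)^(m:ℕ))^γ = (m:ℝ) ^ (((m:ℕ):ℝ) * γ) := by
    rw [← Real.rpow_natCast (m:ℝ) m, ← Real.rpow_mul (by positivity)]
  have hm1R : (1:ℝ) ≤ (m:ℝ) := by exact_mod_cast Nat.one_le_cast.2 hm0
  have f4 : (m:ℝ) ^ (((m:ℕ):ℝ) * γ) ≤ (m:ℝ) ^ (((A*t:ℕ)):ℝ) := by
    apply Real.rpow_le_rpow_of_exponent_le hm1R
    push_cast [hm]
    nlinarith [hγK, show (0:ℝ) ≤ t by linarith]
  have f5 : (m:ℝ) ^ (((A*t:ℕ)):ℝ) = (m:ℝ)^(A*t : ℕ) := Real.rpow_natCast _ _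
  have fchain : (Nat.factorial m : ℝ)^γ ≤ (m:ℝ)^(A*t : ℕ) := by
    calc (Nat.factorial m : ℝ)^γ ≤ ((m:ℝ)^(m:ℕ))^γ := f2
    _ = (m:ℝ) ^ (((m:ℕ):ℝ) * γ) := f3
    _ ≤ (m:ℝ) ^ (((A*t:ℕ)):ℝ) := f4
    _ = (m:ℝ)^(A*t : ℕ) := f5
  have g0 : (m:ℝ) = (K:ℝ)*t := by rw [hm]; push_cast; ring
  have g1 : c^m * (m:ℝ)^(A*t) = (c^K * ((K:ℝ)^A * (t:ℝ)^A))^t := by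
    rw [g0, hm, pow_mul c K t, pow_mul ((K:ℝ)*(t:ℝ)) A t, ← mul_pow,
      mul_pow (K:ℝ) (t:ℝ) A]
  have p2 : c^K * ((K:ℝ)^A * (t:ℝ)^A) < ((t:ℝ)-1)^(A+1) := by
    have hhalf : (t:ℝ)/2 ≤ (t:ℝ)-1 := by linarith
    have p1 : ((t:ℝ)/2)^(A+1) ≤ ((t:ℝ)-1)^(A+1) := pow_le_pow_left₀ (by positivity) hhalf _
    refine lt_of_lt_of_le ?_ p1
    calc c^K * ((K:ℝ)^A * (t:ℝ)^A) = (c^K*(K:ℝ)^A) * (t:ℝ)^A := by ring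
    _ < ((t:ℝ)/2^(A+1)) * (t:ℝ)^A := by
        apply mul_lt_mul_of_pos_right ?_ (by positivity)
        rw [lt_div_iff₀ (by positivity)]
        linarith [httR]
    _ = ((t:ℝ)/2)^(A+1) := by
        rw [div_pow]
        ring
  have p3 : (c^K * ((K:ℝ)^A * (t:ℝ)^A))^t < (((t:ℝ)-1)^(A+1))^t :=
    pow_lt_pow_left₀ p2 (by positivity) (by omega)
  have p4 : (((t:ℝ)-1)^(A+1))^t = ((t-1:ℕ):ℝ)^(q*(m-2*t)) := by
    rw [hexp, pow_mul, h_t1]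
  have hlbR : ((t-1:ℕ):ℝ)^(q*(m-2*t)) ≤ (Nat.card {σ : Finpartition (Finset.univ : Finset (Fin (q * m))) //
          (∀ B ∈ σ.parts, ∀ ℓ < m, (B.filter (fun i => i.val / q = ℓ)).card ≤ 1) ∧
          (∀ B ∈ σ.parts, 2 ≤ B.card) ∧
          (∀ a b : Fin m, Relation.ReflTransGen
            (fun u v : Fin m => ∃ B ∈ σ.parts,
              (∃ x ∈ B, x.val / q = u.val) ∧ (∃ x ∈ B, x.val / q = v.val)) a b)} : ℝ) := by
    have := (Nat.cast_le (α := ℝ)).2 hlb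
    push_cast at this
    exact this
  have final : c ^ m * (Nat.factorial m : ℝ) ^ γ < ((t-1:ℕ):ℝ)^(q*(m-2*t)) := by
    calc c ^ m * (Nat.factorial m : ℝ) ^ γ ≤ c^m * (m:ℝ)^(A*t) := by
          apply mul_le_mul_of_nonneg_left fchain (by positivity)
    _ = (c^K * ((K:ℝ)^A * (t:ℝ)^A))^t := g1
    _ < (((t:ℝ)-1)^(A+1))^t := p3
    _ = ((t-1:ℕ):ℝ)^(q*(m-2*t)) := p4
  linarith [hb, hlbR, final]
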